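/- Let G, x, y > 0, α > 1, M > 0, and suppose M/y < 1 + G/x. Then for every k ≥ 1, the time Σ_{n=0}^{k-1} y·α^n/(G+nx) + M/(G+kx) to buy k items and wait strictly exceeds M/G, the time to just wait. -/

import Mathlib

theorem stmt_4 (G x y α M : ℝ)
    (hG : 0 < G) (hx : 0 < x) (hy : 0 < y) (hα : 1 < α) (hM : 0 < M)
    (h : M / y < 1 + G / x) :
    ∀ k : ℕ, 1 ≤ k →
      (∑ n ∈ Finset.range k, y * α ^ n / (G + n * x)) + M / (G + k * x) > M / G := by
  have hkey : M * x < y * (x + G) := by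
    have h2 : M / y < (x + G) / x := by
      rw [add_div, div_self hx.ne']; linarith
    have := (div_lt_div_iff₀ hy hx).mp h2
    linarith
  have step : ∀ n : ℕ,
      M / (G + n * x) - M / (G + ((n : ℝ) + 1) * x) < y * α ^ n / (G + n * x) := by
    intro n
    have hA : (0:ℝ) < G + n * x := by positivity
    have hB : (0:ℝ) < G + ((n : ℝ) + 1) * x := by positivity
    have hBx : x + G ≤ G + ((n : ℝ) + 1) * x := by
      have : (0:ℝ) ≤ (n : ℝ) * x := by positivity
      nlinarith
    have hαn : (1:ℝ) ≤ α ^ n := one_le_pow₀ hα.le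
    rw [div_sub_div _ _ hA.ne' hB.ne', div_lt_div_iff₀ (by positivity) hA]
    have hyα : y ≤ y * α ^ n := by nlinarith
    nlinarith [mul_le_mul_of_nonneg_right hyα (mul_pos hA hB).le,
      mul_le_mul_of_nonneg_left hBx (mul_pos hy hA).le,
      mul_lt_mul_of_pos_right hkey hA]
  intro k hk
  induction k, hk using Nat.le_induction with
  | base =>
    have := step 0
    simp only [Nat.cast_zero, zero_mul, add_zero, pow_zero, mul_one, Nat.cast_one,
      Finset.sum_range_one] at this ⊢
    norm_num at this ⊢
    linarith
  | succ k hk ih =>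
    rw [Finset.sum_range_succ]
    have := step k
    push_cast
    push_cast at ih
    linarith
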